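/- As formal power series in q with integer coefficients: ∏_{n≥1} (1-q^{14n})^7 (1-q^{4n})^5 (1-q^n)^6 / ((1-q^{28n})^3 (1-q^{7n})^2 (1-q^{2n})^{13}) ≡ 7·∏_{n≥1} (1-q^{14n})^6 (1-q^{4n})^5 / ((1-q^{28n})^3 (1-q^{2n})^{10}) (mod 2), and consequently 1 + 7·∏_{n≥1} (1-q^{14n})^7 (1-q^{4n})^5 (1-q^n)^6 / ((1-q^{28n})^3 (1-q^{7n})^2 (1-q^{2n})^{13}) ≡ 0 (mod 2) coefficientwise. -/

import Mathlib

open PowerSeries Finset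

lemma two_zero : (2 : (ZMod 2)⟦X⟧) = 0 := by
  rw [← map_ofNat (C (R := ZMod 2)) 2]
  simp [show ((2 : ZMod 2)) = 0 from rfl]

lemma seven_one : (7 : (ZMod 2)⟦X⟧) = 1 := by
  have h : (7 : (ZMod 2)⟦X⟧) = 2 * 3 + 1 := by norm_num
  rw [h, two_zero]; ring

lemma sq2 (k : ℕ) : (1 - (X : (ZMod 2)⟦X⟧) ^ k) ^ 2 = 1 - X ^ (2 * k) := by
  rw [two_mul, pow_add]
  linear_combination (X ^ k * X ^ k - X ^ k : (ZMod 2)⟦X⟧) * two_zero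

lemma term1 (k : ℕ) :
    (1 - (X : (ZMod 2)⟦X⟧) ^ (14 * k)) ^ 7 * (1 - X ^ (4 * k)) ^ 5 * (1 - X ^ k) ^ 6 *
      ((1 - X ^ (28 * k)) ^ 3 * (1 - X ^ (2 * k)) ^ 10) =
    (1 - X ^ (14 * k)) ^ 6 * (1 - X ^ (4 * k)) ^ 5 *
      ((1 - X ^ (28 * k)) ^ 3 * (1 - X ^ (7 * k)) ^ 2 * (1 - X ^ (2 * k)) ^ 13) := by
  rw [show 28 * k = 2 * (2 * (7 * k)) by ring, show 14 * k = 2 * (7 * k) by ring,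
    show 4 * k = 2 * (2 * k) by ring]
  simp only [← sq2]
  ring

lemma term2 (k : ℕ) :
    (1 - (X : (ZMod 2)⟦X⟧) ^ (28 * k)) ^ 3 * (1 - X ^ (7 * k)) ^ 2 * (1 - X ^ (2 * k)) ^ 13 =
    (1 - X ^ (14 * k)) ^ 7 * (1 - X ^ (4 * k)) ^ 5 * (1 - X ^ k) ^ 6 := by
  rw [show 28 * k = 2 * (2 * (7 * k)) by ring, show 14 * k = 2 * (7 * k) by ring,
    show 4 * k = 2 * (2 * k) by ring]
  simp only [← sq2]
  ring

theorem p_has_integer_coefficients (d : ℕ) :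
    ((PowerSeries.coeff (R := ℤ) d)
        ((∏ n ∈ range (d + 1),
            ((1 - (X : ℤ⟦X⟧) ^ (14 * (n + 1))) ^ 7 * (1 - X ^ (4 * (n + 1))) ^ 5 *
              (1 - X ^ (n + 1)) ^ 6)) *
         (∏ n ∈ range (d + 1),
            ((1 - (X : ℤ⟦X⟧) ^ (28 * (n + 1))) ^ 3 * (1 - X ^ (2 * (n + 1))) ^ 10))) ≡
      (PowerSeries.coeff (R := ℤ) d)
        (7 * (∏ n ∈ range (d + 1),
            ((1 - (X : ℤ⟦X⟧) ^ (14 * (n + 1))) ^ 6 * (1 - X ^ (4 * (n + 1))) ^ 5)) *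
         (∏ n ∈ range (d + 1),
            ((1 - (X : ℤ⟦X⟧) ^ (28 * (n + 1))) ^ 3 * (1 - X ^ (7 * (n + 1))) ^ 2 *
              (1 - X ^ (2 * (n + 1))) ^ 13))) [ZMOD 2]) ∧
    ((PowerSeries.coeff (R := ℤ) d)
        ((∏ n ∈ range (d + 1),
            ((1 - (X : ℤ⟦X⟧) ^ (28 * (n + 1))) ^ 3 * (1 - X ^ (7 * (n + 1))) ^ 2 *
              (1 - X ^ (2 * (n + 1))) ^ 13)) +
         7 * (∏ n ∈ range (d + 1),
            ((1 - (X : ℤ⟦X⟧) ^ (14 * (n + 1))) ^ 7 * (1 - X ^ (4 * (n + 1))) ^ 5 *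
              (1 - X ^ (n + 1)) ^ 6))) ≡ 0 [ZMOD 2]) := by
  have key : ∀ P : ℤ⟦X⟧, ((PowerSeries.coeff (R := ℤ) d P : ℤ) : ZMod 2) =
      PowerSeries.coeff (R := ZMod 2) d (PowerSeries.map (Int.castRingHom (ZMod 2)) P) :=
    fun P => by rw [PowerSeries.coeff_map]; rfl
  constructor
  · apply (ZMod.intCast_eq_intCast_iff _ _ 2).mp
    rw [key, key]
    congr 1
    simp only [map_mul, map_prod, map_pow, map_sub, map_one, PowerSeries.map_X, map_ofNat]
    rw [seven_one, one_mul, ← prod_mul_distrib, ← prod_mul_distrib]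
    exact prod_congr rfl fun n _ => term1 (n + 1)
  · apply (ZMod.intCast_eq_intCast_iff _ _ 2).mp
    rw [key]
    have h0 : PowerSeries.map (Int.castRingHom (ZMod 2))
        ((∏ n ∈ range (d + 1),
            ((1 - (X : ℤ⟦X⟧) ^ (28 * (n + 1))) ^ 3 * (1 - X ^ (7 * (n + 1))) ^ 2 *
              (1 - X ^ (2 * (n + 1))) ^ 13)) +
         7 * (∏ n ∈ range (d + 1),
            ((1 - (X : ℤ⟦X⟧) ^ (14 * (n + 1))) ^ 7 * (1 - X ^ (4 * (n + 1))) ^ 5 *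
              (1 - X ^ (n + 1)) ^ 6))) = 0 := by
      simp only [map_add, map_mul, map_prod, map_pow, map_sub, map_one, PowerSeries.map_X,
        map_ofNat]
      rw [seven_one, one_mul]
      rw [show (∏ n ∈ range (d + 1),
            ((1 - (X : (ZMod 2)⟦X⟧) ^ (28 * (n + 1))) ^ 3 * (1 - X ^ (7 * (n + 1))) ^ 2 *
              (1 - X ^ (2 * (n + 1))) ^ 13)) =
          ∏ n ∈ range (d + 1),
            ((1 - (X : (ZMod 2)⟦X⟧) ^ (14 * (n + 1))) ^ 7 * (1 - X ^ (4 * (n + 1))) ^ 5 *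
              (1 - X ^ (n + 1)) ^ 6) from prod_congr rfl fun n _ => term2 (n + 1)]
      rw [← two_mul, two_zero, zero_mul]
    rw [h0]
    simp
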